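/- Let h ∈ B(ℍ⊗ℍ) and a density operator ϱ on ℍ satisfy tr₂((1⊗ϱ)h) = 0 and tr₁((ϱ⊗1)h) = 0. For edges e = {i,j} ⊂ {1,…,N}, let h_e denote the copy of h acting on factors i and j of ℍ^{⊗N}. If in a product h_{e₁}⋯h_{e_k} some index a ∈ {1,…,N} appears as an endpoint of exactly one of the edges e₁,…,e_k, then tr(ϱ^{⊗N} h_{e₁}⋯h_{e_k}) = 0. -/

import Mathlib

open Matrix Kronecker
open scoped ComplexOrder

/-- Partial trace over the second tensor factor. -/
noncomputable def ptrace2 {n : ℕ} (M : Matrix (Fin n × Fin n) (Fin n × Fin n) ℂ) :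
    Matrix (Fin n) (Fin n) ℂ :=
  Matrix.of fun i j => ∑ k : Fin n, M (i, k) (j, k)

/-- Partial trace over the first tensor factor. -/
noncomputable def ptrace1 {n : ℕ} (M : Matrix (Fin n × Fin n) (Fin n × Fin n) ℂ) :
    Matrix (Fin n) (Fin n) ℂ :=
  Matrix.of fun i j => ∑ k : Fin n, M (k, i) (k, j)

/-- The copy `h_e` of a two-body operator `h` acting on the tensor factors `i` and `j`
of `ℍ^{⊗N}` (and as the identity on the remaining factors). -/
noncomputable def twoBody {n N : ℕ} (h : Matrix (Fin n × Fin n) (Fin n × Fin n) ℂ)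
    (i j : Fin N) : Matrix (Fin N → Fin n) (Fin N → Fin n) ℂ :=
  Matrix.of fun x y =>
    h (x i, x j) (y i, y j) *
      ∏ l ∈ Finset.univ \ {i, j}, (if x l = y l then (1 : ℂ) else 0)

/-- The `N`-fold tensor power `ϱ^{⊗N}`. -/
noncomputable def tensorPow {n : ℕ} (ϱ : Matrix (Fin n) (Fin n) ℂ) (N : ℕ) :
    Matrix (Fin N → Fin n) (Fin N → Fin n) ℂ :=
  Matrix.of fun x y => ∏ l : Fin N, ϱ (x l) (y l)


section helpers
variable {n N : ℕ}

/-- Invariance of a matrix under changing coordinate `a` of both indices. -/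
def InvAt (a : Fin N) (M : Matrix (Fin N → Fin n) (Fin N → Fin n) ℂ) : Prop :=
  ∀ x y (u v : Fin n), M (Function.update x a u) (Function.update y a v) = M x y

/-- `M` factors at coordinate `a` through the one-site matrix `g`. -/
def FactorsAt (a : Fin N) (g : Matrix (Fin n) (Fin n) ℂ)
    (M : Matrix (Fin N → Fin n) (Fin N → Fin n) ℂ) : Prop :=
  ∃ M₀, InvAt a M₀ ∧ ∀ x y, M x y = g (x a) (y a) * M₀ x y

lemma InvAt.left {a : Fin N} {M : Matrix (Fin N → Fin n) (Fin N → Fin n) ℂ}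
    (hM : InvAt a M) (x y : Fin N → Fin n) (u : Fin n) :
    M (Function.update x a u) y = M x y := by
  have := hM x y u (y a)
  rwa [Function.update_eq_self] at this

lemma InvAt.right {a : Fin N} {M : Matrix (Fin N → Fin n) (Fin N → Fin n) ℂ}
    (hM : InvAt a M) (x y : Fin N → Fin n) (v : Fin n) :
    M x (Function.update y a v) = M x y := by
  have := hM x y (x a) v
  rwa [Function.update_eq_self] at this

/-- Permuting the values at coordinate `a`. -/
def coordEquiv (a : Fin N) (σ : Equiv.Perm (Fin n)) :
    (Fin N → Fin n) ≃ (Fin N → Fin n) where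
  toFun z := Function.update z a (σ (z a))
  invFun z := Function.update z a (σ.symm (z a))
  left_inv z := by
    funext l
    by_cases hl : l = a
    · subst hl; simp
    · simp [Function.update_of_ne hl]
  right_inv z := by
    funext l
    by_cases hl : l = a
    · subst hl; simp
    · simp [Function.update_of_ne hl]

lemma coordEquiv_apply (a : Fin N) (σ : Equiv.Perm (Fin n)) (z : Fin N → Fin n) :
    coordEquiv a σ z = Function.update z a (σ (z a)) := rfl

end helpers

section helpers2
variable {n N : ℕ}

lemma delta_prod (x y : Fin N → Fin n) :
    (if x = y then (1 : ℂ) else 0) = ∏ l : Fin N, (if x l = y l then (1 : ℂ) else 0) := by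
  by_cases hxy : x = y
  · simp [hxy]
  · rw [if_neg hxy]
    obtain ⟨l, hl⟩ := Function.ne_iff.mp hxy
    exact (Finset.prod_eq_zero (Finset.mem_univ l) (by simp [hl])).symm

lemma one_factorsAt (a : Fin N) : FactorsAt a 1 (1 : Matrix (Fin N → Fin n) (Fin N → Fin n) ℂ) := by
  refine ⟨Matrix.of fun x y => ∏ l ∈ Finset.univ.erase a, (if x l = y l then (1 : ℂ) else 0),
    ?_, ?_⟩
  · intro x y u v
    simp only [Matrix.of_apply]
    refine Finset.prod_congr rfl fun l hl => ?_
    have hla : l ≠ a := Finset.ne_of_mem_erase hl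
    rw [Function.update_of_ne hla, Function.update_of_ne hla]
  · intro x y
    simp only [Matrix.one_apply, Matrix.of_apply]
    rw [delta_prod,
      ← Finset.mul_prod_erase Finset.univ (fun l => if x l = y l then (1 : ℂ) else 0)
        (Finset.mem_univ a)]
end helpers2

section helpers3
variable {n N : ℕ}

lemma twoBody_factorsAt (h : Matrix (Fin n × Fin n) (Fin n × Fin n) ℂ)
    {a i j : Fin N} (hia : i ≠ a) (hja : j ≠ a) :
    FactorsAt a 1 (twoBody h i j) := by
  refine ⟨Matrix.of fun x y => h (x i, x j) (y i, y j) *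
      ∏ l ∈ (Finset.univ \ {i, j}).erase a, (if x l = y l then (1 : ℂ) else 0), ?_, ?_⟩
  · intro x y u v
    simp only [Matrix.of_apply]
    rw [Function.update_of_ne hia, Function.update_of_ne hja,
      Function.update_of_ne hia, Function.update_of_ne hja]
    congr 1
    refine Finset.prod_congr rfl fun l hl => ?_
    have hla : l ≠ a := Finset.ne_of_mem_erase hl
    rw [Function.update_of_ne hla, Function.update_of_ne hla]
  · intro x y
    have ha : a ∈ Finset.univ \ ({i, j} : Finset (Fin N)) := by
      simp [Finset.mem_sdiff, hia.symm, hja.symm, Ne.symm]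
    simp only [twoBody, Matrix.of_apply, Matrix.one_apply]
    rw [← Finset.mul_prod_erase _ (fun l => if x l = y l then (1 : ℂ) else 0) ha]
    ring

lemma tensorPow_factorsAt (ϱ : Matrix (Fin n) (Fin n) ℂ) (a : Fin N) :
    FactorsAt a ϱ (tensorPow ϱ N) := by
  refine ⟨Matrix.of fun x y => ∏ l ∈ Finset.univ.erase a, ϱ (x l) (y l), ?_, ?_⟩
  · intro x y u v
    simp only [Matrix.of_apply]
    refine Finset.prod_congr rfl fun l hl => ?_
    have hla : l ≠ a := Finset.ne_of_mem_erase hl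
    rw [Function.update_of_ne hla, Function.update_of_ne hla]
  · intro x y
    simp only [tensorPow, Matrix.of_apply]
    rw [← Finset.mul_prod_erase _ (fun l => ϱ (x l) (y l)) (Finset.mem_univ a)]

end helpers3

section helpers4
variable {n N : ℕ}

lemma FactorsAt.mul_one {a : Fin N} {g : Matrix (Fin n) (Fin n) ℂ}
    {M M' : Matrix (Fin N → Fin n) (Fin N → Fin n) ℂ}
    (hM : FactorsAt a g M) (hM' : FactorsAt a 1 M') : FactorsAt a g (M * M') := by
  obtain ⟨M₀, hinv, hfac⟩ := hM
  obtain ⟨M₀', hinv', hfac'⟩ := hM'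
  refine ⟨Matrix.of fun x y => ∑ z, if z a = y a then M₀ x z * M₀' z y else 0, ?_, ?_⟩
  · intro x y u v
    simp only [Matrix.of_apply, Function.update_self]
    rw [← Equiv.sum_comp (coordEquiv a (Equiv.swap (y a) v))
      (fun z => if z a = v then M₀ (Function.update x a u) z *
        M₀' z (Function.update y a v) else 0)]
    refine Finset.sum_congr rfl fun z _ => ?_
    rw [coordEquiv_apply]
    rw [Function.update_self]
    have hcond : (Equiv.swap (y a) v) (z a) = v ↔ z a = y a := by
      constructor
      · intro hz
        have := (Equiv.swap (y a) v).injective (a₁ := z a) (a₂ := y a)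
        exact this (by rw [hz, Equiv.swap_apply_left])
      · intro hz; rw [hz, Equiv.swap_apply_left]
    rw [hinv x z u _, hinv' z y _ v]
    simp only [hcond]
  · intro x y
    simp only [Matrix.mul_apply, Matrix.of_apply, Finset.mul_sum]
    refine Finset.sum_congr rfl fun z _ => ?_
    rw [hfac, hfac', Matrix.one_apply]
    by_cases hz : z a = y a
    · rw [if_pos hz, if_pos hz, hz]; ring
    · rw [if_neg hz, if_neg hz]; ring

lemma FactorsAt.one_mul {a : Fin N} {g : Matrix (Fin n) (Fin n) ℂ}
    {M M' : Matrix (Fin N → Fin n) (Fin N → Fin n) ℂ}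
    (hM : FactorsAt a 1 M) (hM' : FactorsAt a g M') : FactorsAt a g (M * M') := by
  obtain ⟨M₀, hinv, hfac⟩ := hM
  obtain ⟨M₀', hinv', hfac'⟩ := hM'
  refine ⟨Matrix.of fun x y => ∑ z, if z a = x a then M₀ x z * M₀' z y else 0, ?_, ?_⟩
  · intro x y u v
    simp only [Matrix.of_apply, Function.update_self]
    rw [← Equiv.sum_comp (coordEquiv a (Equiv.swap (x a) u))
      (fun z => if z a = u then M₀ (Function.update x a u) z *
        M₀' z (Function.update y a v) else 0)]
    refine Finset.sum_congr rfl fun z _ => ?_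
    rw [coordEquiv_apply]
    rw [Function.update_self]
    have hcond : (Equiv.swap (x a) u) (z a) = u ↔ z a = x a := by
      constructor
      · intro hz
        have := (Equiv.swap (x a) u).injective (a₁ := z a) (a₂ := x a)
        exact this (by rw [hz, Equiv.swap_apply_left])
      · intro hz; rw [hz, Equiv.swap_apply_left]
    rw [hinv x z u _, hinv' z y _ v]
    simp only [hcond]
  · intro x y
    simp only [Matrix.mul_apply, Matrix.of_apply, Finset.mul_sum]
    refine Finset.sum_congr rfl fun z _ => ?_
    rw [hfac, hfac', Matrix.one_apply]
    by_cases hz : x a = z a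
    · rw [if_pos hz, if_pos hz.symm, ← hz]; ring
    · rw [if_neg hz, if_neg fun hh => hz hh.symm]; ring

lemma list_prod_factorsAt {a : Fin N} {L : List (Matrix (Fin N → Fin n) (Fin N → Fin n) ℂ)}
    (hL : ∀ M ∈ L, FactorsAt a 1 M) : FactorsAt a 1 L.prod := by
  induction L with
  | nil => simpa using one_factorsAt a
  | cons M L ih =>
    rw [List.prod_cons]
    exact FactorsAt.one_mul (hL M (by simp)) (ih fun M' hM' => hL M' (by simp [hM']))

end helpers4

section key
variable {n N : ℕ}

lemma sum4_comm {α β γ δ : Type*} [Fintype α] [Fintype β] [Fintype γ] [Fintype δ]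
    (f : α → β → γ → δ → ℂ) :
    ∑ u, ∑ x, ∑ v, ∑ y, f u x v y = ∑ x, ∑ y, ∑ u, ∑ v, f u x v y := by
  rw [Finset.sum_comm]
  refine Finset.sum_congr rfl fun x _ => ?_
  refine Eq.trans (Finset.sum_congr rfl fun u _ => Finset.sum_comm) ?_
  exact Finset.sum_comm

lemma trace_mul_eq_zero_of_centered {a j : Fin N} (hja : j ≠ a) (w₀ : Fin n)
    (h : Matrix (Fin n × Fin n) (Fin n × Fin n) ℂ) (ϱ : Matrix (Fin n) (Fin n) ℂ)
    (hc : ∀ β β' : Fin n, (∑ u, ∑ v, ϱ v u * h (u, β) (v, β')) = 0)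
    {C : Matrix (Fin N → Fin n) (Fin N → Fin n) ℂ} (hC : FactorsAt a ϱ C) :
    (twoBody h a j * C).trace = 0 := by
  obtain ⟨C₀, hinv, hfac⟩ := hC
  set e := Equiv.funSplitAt a (Fin n) with he
  have hself : ∀ (p : Fin n × ({ l : Fin N // l ≠ a } → Fin n)), e.symm p a = p.1 := by
    intro p
    exact congrArg Prod.fst (e.apply_symm_apply p)
  have hne : ∀ (p : Fin n × ({ l : Fin N // l ≠ a } → Fin n)) {l : Fin N} (hl : l ≠ a),
      e.symm p l = p.2 ⟨l, hl⟩ := by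
    intro p l hl
    exact congrFun (congrArg Prod.snd (e.apply_symm_apply p)) ⟨l, hl⟩
  have hupd : ∀ (u w : Fin n) (f : { l : Fin N // l ≠ a } → Fin n),
      e.symm (u, f) = Function.update (e.symm (w, f)) a u := by
    intro u w f
    funext l
    by_cases hl : l = a
    · subst hl; rw [Function.update_self, hself]
    · rw [Function.update_of_ne hl, hne (u, f) hl, hne (w, f) hl]
  have htr : (twoBody h a j * C).trace = ∑ x, ∑ y, twoBody h a j x y * C y x := by
    simp [Matrix.trace, Matrix.diag, Matrix.mul_apply]
  rw [htr]
  rw [← Equiv.sum_comp e.symm (fun x => ∑ y, twoBody h a j x y * C y x)]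
  have hinner : ∀ px, (∑ y, twoBody h a j (e.symm px) y * C y (e.symm px)) =
      ∑ py, twoBody h a j (e.symm px) (e.symm py) * C (e.symm py) (e.symm px) :=
    fun px => (Equiv.sum_comp e.symm _).symm
  rw [Finset.sum_congr rfl fun px _ => hinner px]
  rw [Fintype.sum_prod_type]
  have : ∀ u xh, (∑ py, twoBody h a j (e.symm (u, xh)) (e.symm py) *
      C (e.symm py) (e.symm (u, xh))) = ∑ v, ∑ yh, twoBody h a j (e.symm (u, xh)) (e.symm (v, yh)) *
      C (e.symm (v, yh)) (e.symm (u, xh)) := fun u xh => Fintype.sum_prod_type _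
  simp only [this]
  rw [sum4_comm]
  refine Finset.sum_eq_zero fun xh _ => Finset.sum_eq_zero fun yh _ => ?_
  set X₀ := e.symm (w₀, xh) with hX₀
  set Y₀ := e.symm (w₀, yh) with hY₀
  set R : ℂ := (∏ l ∈ Finset.univ \ {a, j}, (if X₀ l = Y₀ l then (1 : ℂ) else 0)) * C₀ Y₀ X₀
    with hR
  have hpt : ∀ u v, twoBody h a j (e.symm (u, xh)) (e.symm (v, yh)) *
      C (e.symm (v, yh)) (e.symm (u, xh)) =
      (ϱ v u * h (u, xh ⟨j, hja⟩) (v, yh ⟨j, hja⟩)) * R := by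
    intro u v
    rw [hfac]
    simp only [twoBody, Matrix.of_apply]
    rw [hself (u, xh), hself (v, yh), hne (u, xh) hja, hne (v, yh) hja]
    have hprod : (∏ l ∈ Finset.univ \ {a, j},
        (if e.symm (u, xh) l = e.symm (v, yh) l then (1 : ℂ) else 0)) =
        ∏ l ∈ Finset.univ \ {a, j}, (if X₀ l = Y₀ l then (1 : ℂ) else 0) := by
      refine Finset.prod_congr rfl fun l hl => ?_
      have hla : l ≠ a := by
        intro hcon
        rw [Finset.mem_sdiff] at hl
        exact hl.2 (by simp [hcon])
      rw [hne (u, xh) hla, hne (v, yh) hla, hX₀, hY₀, hne (w₀, xh) hla, hne (w₀, yh) hla]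
    have hC₀ : C₀ (e.symm (v, yh)) (e.symm (u, xh)) = C₀ Y₀ X₀ := by
      rw [hupd v w₀ yh, hupd u w₀ xh, hY₀, hX₀, hinv]
    rw [hprod, hC₀, hR]
    ring
  calc (∑ u, ∑ v, twoBody h a j (e.symm (u, xh)) (e.symm (v, yh)) *
        C (e.symm (v, yh)) (e.symm (u, xh)))
      = ∑ u, ∑ v, (ϱ v u * h (u, xh ⟨j, hja⟩) (v, yh ⟨j, hja⟩)) * R :=
        Finset.sum_congr rfl fun u _ => Finset.sum_congr rfl fun v _ => hpt u v
    _ = (∑ u, ∑ v, ϱ v u * h (u, xh ⟨j, hja⟩) (v, yh ⟨j, hja⟩)) * R := by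
        simp only [← Finset.sum_mul]
    _ = 0 := by rw [hc, zero_mul]

end key

open Kronecker in
lemma centered1 {n : ℕ} (h : Matrix (Fin n × Fin n) (Fin n × Fin n) ℂ)
    (ϱ : Matrix (Fin n) (Fin n) ℂ)
    (hc1 : ptrace1 ((ϱ ⊗ₖ (1 : Matrix (Fin n) (Fin n) ℂ)) * h) = 0) (β β' : Fin n) :
    ∑ u, ∑ v, ϱ v u * h (u, β) (v, β') = 0 := by
  have h0 : ptrace1 ((ϱ ⊗ₖ (1 : Matrix (Fin n) (Fin n) ℂ)) * h) β β' = 0 := by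
    rw [hc1]; rfl
  rw [← h0]
  simp only [ptrace1, Matrix.of_apply, Matrix.mul_apply, Fintype.sum_prod_type,
    Matrix.kroneckerMap_apply, Matrix.one_apply, mul_ite, mul_one, mul_zero, ite_mul, zero_mul,
    Finset.sum_ite_eq, Finset.mem_univ, if_true]
  rw [Finset.sum_comm]

open Kronecker in
lemma centered2 {n : ℕ} (h : Matrix (Fin n × Fin n) (Fin n × Fin n) ℂ)
    (ϱ : Matrix (Fin n) (Fin n) ℂ)
    (hc2 : ptrace2 (((1 : Matrix (Fin n) (Fin n) ℂ) ⊗ₖ ϱ) * h) = 0) (β β' : Fin n) :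
    ∑ u, ∑ v, ϱ v u * h (β, u) (β', v) = 0 := by
  have h0 : ptrace2 (((1 : Matrix (Fin n) (Fin n) ℂ) ⊗ₖ ϱ) * h) β β' = 0 := by
    rw [hc2]; rfl
  rw [← h0]
  simp only [ptrace2, Matrix.of_apply, Matrix.mul_apply, Fintype.sum_prod_type,
    Matrix.kroneckerMap_apply, Matrix.one_apply, ite_mul, zero_mul, one_mul]
  have hx : ∀ x : Fin n, (∑ x_1, ∑ x_2, if β = x_1 then ϱ x x_2 * h (x_1, x_2) (β', x) else 0)
      = ∑ x_2, ϱ x x_2 * h (β, x_2) (β', x) := by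
    intro x
    rw [Finset.sum_comm]
    simp [Finset.sum_ite_eq]
  rw [Finset.sum_congr rfl fun x _ => hx x]
  exact Finset.sum_comm

lemma twoBody_swap {n N : ℕ} (h : Matrix (Fin n × Fin n) (Fin n × Fin n) ℂ) (i j : Fin N) :
    twoBody h i j = twoBody (h.submatrix Prod.swap Prod.swap) j i := by
  ext x y
  simp only [twoBody, Matrix.of_apply, Matrix.submatrix_apply, Prod.swap_prod_mk]
  rw [Finset.pair_comm j i]


/-- If `h` is centered with respect to the density operator `ϱ` in both factors, then any
product `h_{e₁}⋯h_{e_k}` in which some site `a` is an endpoint of exactly one edge has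
vanishing expectation in the product state `ϱ^{⊗N}`. -/
theorem isolated_vertex_vanishing {n N k : ℕ}
    (h : Matrix (Fin n × Fin n) (Fin n × Fin n) ℂ)
    (ϱ : Matrix (Fin n) (Fin n) ℂ) (hϱ : ϱ.PosSemidef) (htr : ϱ.trace = 1)
    (hc2 : ptrace2 (((1 : Matrix (Fin n) (Fin n) ℂ) ⊗ₖ ϱ) * h) = 0)
    (hc1 : ptrace1 ((ϱ ⊗ₖ (1 : Matrix (Fin n) (Fin n) ℂ)) * h) = 0)
    (p q : Fin k → Fin N) (hedge : ∀ r, p r ≠ q r)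
    (a : Fin N)
    (honce : (Finset.univ.filter fun r : Fin k => p r = a ∨ q r = a).card = 1) :
    (tensorPow ϱ N * (List.ofFn fun r : Fin k => twoBody h (p r) (q r)).prod).trace = 0 := by
  rcases Nat.eq_zero_or_pos n with hn | hn
  · subst hn
    haveI : IsEmpty (Fin N → Fin 0) := ⟨fun f => (f a).elim0⟩
    simp [Matrix.trace]
  have w₀ : Fin n := ⟨0, hn⟩
  obtain ⟨r₀, hr₀⟩ := Finset.card_eq_one.mp honce
  have hmem : ∀ r : Fin k, (p r = a ∨ q r = a) ↔ r = r₀ := by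
    intro r
    constructor
    · intro hr
      have : r ∈ Finset.filter (fun r : Fin k => p r = a ∨ q r = a) Finset.univ :=
        Finset.mem_filter.mpr ⟨Finset.mem_univ r, hr⟩
      rw [hr₀] at this
      exact Finset.mem_singleton.mp this
    · rintro rfl
      have : r ∈ ({r} : Finset (Fin k)) := Finset.mem_singleton_self r
      rw [← hr₀] at this
      exact (Finset.mem_filter.mp this).2
  have hother : ∀ r : Fin k, r ≠ r₀ → p r ≠ a ∧ q r ≠ a := by
    intro r hr
    constructor
    · exact fun hcon => hr ((hmem r).mp (Or.inl hcon))
    · exact fun hcon => hr ((hmem r).mp (Or.inr hcon))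
  have hr₀a : p r₀ = a ∨ q r₀ = a := (hmem r₀).mpr rfl
  set L := List.ofFn (fun r : Fin k => twoBody h (p r) (q r)) with hL
  have hlen : L.length = k := List.length_ofFn
  have hlt : (r₀ : ℕ) < L.length := by rw [hlen]; exact r₀.isLt
  have hget : L[(r₀ : ℕ)]'hlt = twoBody h (p r₀) (q r₀) := by
    simp [hL, List.getElem_ofFn]
  have hsplit : L = L.take (r₀ : ℕ) ++
      (twoBody h (p r₀) (q r₀) :: L.drop ((r₀ : ℕ) + 1)) := by
    conv_lhs => rw [← List.take_append_drop (r₀ : ℕ) L]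
    rw [List.drop_eq_getElem_cons hlt, hget]
  have htake : ∀ M ∈ L.take (r₀ : ℕ), FactorsAt a 1 M := by
    intro M hM
    rw [List.mem_iff_getElem] at hM
    obtain ⟨i, hi, rfl⟩ := hM
    have hi' : i < (r₀ : ℕ) ⊓ k := by simpa [List.length_take, hlen] using hi
    have hik : i < k := lt_of_lt_of_le hi' inf_le_right
    have hir : i < (r₀ : ℕ) := lt_of_lt_of_le hi' inf_le_left
    have hne : (⟨i, hik⟩ : Fin k) ≠ r₀ := by
      intro hcon
      rw [← hcon] at hir
      exact lt_irrefl _ hir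
    obtain ⟨h1, h2⟩ := hother ⟨i, hik⟩ hne
    have : (L.take (r₀ : ℕ))[i] = twoBody h (p ⟨i, hik⟩) (q ⟨i, hik⟩) := by
      rw [List.getElem_take]
      simp [hL, List.getElem_ofFn]
    rw [this]
    exact twoBody_factorsAt h h1 h2
  have hdrop : ∀ M ∈ L.drop ((r₀ : ℕ) + 1), FactorsAt a 1 M := by
    intro M hM
    rw [List.mem_iff_getElem] at hM
    obtain ⟨i, hi, rfl⟩ := hM
    have hik : (r₀ : ℕ) + 1 + i < k := by
      have := hi
      rw [List.length_drop, hlen] at this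
      omega
    have hne : (⟨(r₀ : ℕ) + 1 + i, hik⟩ : Fin k) ≠ r₀ := by
      intro hcon
      have : (r₀ : ℕ) + 1 + i = (r₀ : ℕ) := congrArg Fin.val hcon
      omega
    obtain ⟨h1, h2⟩ := hother _ hne
    have : (L.drop ((r₀ : ℕ) + 1))[i] =
        twoBody h (p ⟨(r₀ : ℕ) + 1 + i, hik⟩) (q ⟨(r₀ : ℕ) + 1 + i, hik⟩) := by
      rw [List.getElem_drop]
      simp [hL, List.getElem_ofFn]
    rw [this]
    exact twoBody_factorsAt h h1 h2
  rw [hsplit, List.prod_append, List.prod_cons]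
  have hassoc : tensorPow ϱ N * ((L.take (r₀ : ℕ)).prod *
      (twoBody h (p r₀) (q r₀) * (L.drop ((r₀ : ℕ) + 1)).prod)) =
      (tensorPow ϱ N * (L.take (r₀ : ℕ)).prod * twoBody h (p r₀) (q r₀)) *
        (L.drop ((r₀ : ℕ) + 1)).prod := by
    simp only [mul_assoc]
  rw [hassoc, Matrix.trace_mul_comm, ← mul_assoc, Matrix.trace_mul_comm]
  have hC : FactorsAt a ϱ ((L.drop ((r₀ : ℕ) + 1)).prod *
      (tensorPow ϱ N * (L.take (r₀ : ℕ)).prod)) :=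
    FactorsAt.one_mul (list_prod_factorsAt hdrop)
      (FactorsAt.mul_one (tensorPow_factorsAt ϱ a) (list_prod_factorsAt htake))
  rcases hr₀a with hpa | hqa
  · have hqa' : q r₀ ≠ a := fun hcon => hedge r₀ (hpa.trans hcon.symm)
    rw [hpa]
    exact trace_mul_eq_zero_of_centered hqa' w₀ h ϱ (centered1 h ϱ hc1) hC
  · have hpa' : p r₀ ≠ a := fun hcon => hedge r₀ (by rw [hcon, hqa])
    rw [twoBody_swap h (p r₀) (q r₀), hqa]
    refine trace_mul_eq_zero_of_centered hpa' w₀ _ ϱ (fun β β' => ?_) hC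
    simpa using centered2 h ϱ hc2 β β'
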